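/- Let σ_ρ(x) = max(x, ρx) with 0 < ρ ≤ 1, let X = (x^(1),…,x^(N)) ∈ ℝ^{d×N} with labels y ∈ ℝ^N, and consider the loss L(a,w) = (1/(2N)) Σ_{n=1}^N (y^(n) − a·σ_ρ(wᵀx^(n)))². Let a : [0,∞) → ℝ and w : [0,∞) → ℝ^d be differentiable curves such that w(t)ᵀx^(n) ≠ 0 for all t ≥ 0 and all n, and (a'(t), w'(t)) equals the negative gradient of L at (a(t), w(t)). Assume δ := a(0)² − ‖w(0)‖² ≥ 0 and w̃(0) := a(0)w(0) ≠ 0, set z = −(3/2)·√(√(‖w̃(0)‖² + δ²/4) − δ/2) · w̃(0)/‖w̃(0)‖ and q(u) = q̂_δ(‖u‖) + zᵀu for u ≠ 0. If (a(t), w(t)) converges as t → ∞ to (a∞, w∞) with a∞·w∞ ≠ 0, w∞ᵀx^(n) ≠ 0 for all n, and a∞·σ_ρ(w∞ᵀx^(n)) = y^(n) for all n, then there exists ν ∈ ℝ^N such that the Lagrange stationarity conditions hold: the gradient in w of the map w ↦ q(a∞·w) at w∞ equals Σ_{n=1}^N ν_n times the gradient in w of the map w ↦ a∞·σ_ρ(wᵀx^(n))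 at w∞, and the derivative in a of the map a ↦ q(a·w∞) at a∞ equals Σ_{n=1}^N ν_n·σ_ρ(w∞ᵀx^(n)). -/

import Mathlib

/-- The square loss of a two-layer single neuron with leaky-ReLU activation
`σ_ρ(x) = max(x, ρx)`: `L(a,w) = (1/(2N)) Σₙ (yⁿ − a·σ_ρ(wᵀxⁿ))²`. -/
noncomputable def leakyLoss {d N : ℕ} (ρ : ℝ) (X : Fin N → EuclideanSpace ℝ (Fin d))
    (y : Fin N → ℝ) (a : ℝ) (w : EuclideanSpace ℝ (Fin d)) : ℝ :=
  1 / (2 * N) * ∑ n, (y n - a * max (∑ i, w i * X n i) (ρ * ∑ i, w i * X n i)) ^ 2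

/-- The radial part `q̂_δ` of the single-neuron implicit regularizer. -/
noncomputable def qhat (δ x : ℝ) : ℝ :=
  (x ^ 2 - δ / 2 * (δ / 2 + Real.sqrt (x ^ 2 + δ ^ 2 / 4))) *
    Real.sqrt (Real.sqrt (x ^ 2 + δ ^ 2 / 4) - δ / 2) / x



open Real InnerProductSpace

local notation "⟪" x ", " y "⟫" => @inner ℝ _ _ x y

variable {F : Type*} [NormedAddCommGroup F] [InnerProductSpace ℝ F] [CompleteSpace F]

lemma hasGradientAt_of_fderiv {f : F → ℝ} {L : F →L[ℝ] ℝ} {g : F} {x : F}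
    (h : HasFDerivAt f L x) (he : ∀ v, L v = ⟪g, v⟫) : HasGradientAt f g x := by
  have : InnerProductSpace.toDual ℝ F g = L :=
    ContinuousLinearMap.ext fun v => by rw [InnerProductSpace.toDual_apply_apply, he]
  rw [hasGradientAt_iff_hasFDerivAt, this]; exact h

lemma hasGradientAt_inner_const (c x : F) : HasGradientAt (fun v => ⟪c, v⟫) c x := by
  refine hasGradientAt_of_fderiv ((innerSL ℝ c).hasFDerivAt) fun v => rfl

lemma HasGradientAt.add' {f g : F → ℝ} {gf gg x : F}
    (hf : HasGradientAt f gf x) (hg : HasGradientAt g gg x) :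
    HasGradientAt (fun v => f v + g v) (gf + gg) x := by
  refine hasGradientAt_of_fderiv (hf.hasFDerivAt.add hg.hasFDerivAt) fun v => ?_
  simp [InnerProductSpace.toDual_apply_apply, inner_add_left]

lemma HasGradientAt.comp_const_smul {f : F → ℝ} {gf : F} {c : ℝ} {x : F}
    (hf : HasGradientAt f gf (c • x)) :
    HasGradientAt (fun v => f (c • v)) (c • gf) x := by
  have hs : HasFDerivAt (fun v : F => c • v) (c • ContinuousLinearMap.id ℝ F) x :=
    (c • ContinuousLinearMap.id ℝ F).hasFDerivAt
  refine hasGradientAt_of_fderiv (hf.hasFDerivAt.comp x hs) fun v => ?_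
  simp [InnerProductSpace.toDual_apply_apply, real_inner_smul_left, real_inner_smul_right]

lemma HasGradientAt.scalar_comp {f : F → ℝ} {gf : F} {x : F} {g : ℝ → ℝ} {g' : ℝ}
    (hg : HasDerivAt g g' (f x)) (hf : HasGradientAt f gf x) :
    HasGradientAt (fun v => g (f v)) (g' • gf) x := by
  refine hasGradientAt_of_fderiv (hg.comp_hasFDerivAt x hf.hasFDerivAt) fun v => ?_
  simp [InnerProductSpace.toDual_apply_apply, real_inner_smul_left, mul_comm]

lemma hasGradientAt_norm_sq (x : F) : HasGradientAt (fun v => ‖v‖ ^ 2) ((2:ℝ) • x) x := by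
  have h := (hasFDerivAt_id x).inner ℝ (hasFDerivAt_id x)
  have h2 : HasFDerivAt (fun v : F => ‖v‖ ^ 2)
      ((fderivInnerCLM ℝ ((id x), (id x))).comp ((ContinuousLinearMap.id ℝ F).prod
        (ContinuousLinearMap.id ℝ F))) x := by
    refine h.congr_of_eventuallyEq (Filter.Eventually.of_forall fun v => ?_)
    exact (real_inner_self_eq_norm_sq v).symm
  refine hasGradientAt_of_fderiv h2 fun v => ?_
  simp [fderivInnerCLM_apply, real_inner_smul_left, real_inner_smul_right, two_mul,
    real_inner_comm v x]

lemma HasGradientAt.congr_nhds {f g : F → ℝ} {gf x : F} (hf : HasGradientAt f gf x)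
    (h : f =ᶠ[nhds x] g) : HasGradientAt g gf x := by
  rw [hasGradientAt_iff_hasFDerivAt] at hf ⊢
  exact hf.congr_of_eventuallyEq h.symm

lemma qhat_eq {δ x : ℝ} (hδ : 0 ≤ δ) (hx : 0 < x) :
    qhat δ x = Real.sqrt (Real.sqrt (x ^ 2 + δ ^ 2 / 4) + δ / 2) *
      (Real.sqrt (x ^ 2 + δ ^ 2 / 4) - δ) := by
  set s := Real.sqrt (x ^ 2 + δ ^ 2 / 4) with hs
  have harg : (0:ℝ) ≤ x ^ 2 + δ ^ 2 / 4 := by positivity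
  have hs2 : s ^ 2 = x ^ 2 + δ ^ 2 / 4 := Real.sq_sqrt harg
  have hs0 : 0 ≤ s := Real.sqrt_nonneg _
  have hsd : δ / 2 < s := by nlinarith
  have hb2 : Real.sqrt (s - δ / 2) ^ 2 = s - δ / 2 := Real.sq_sqrt (by linarith)
  have ha2 : Real.sqrt (s + δ / 2) ^ 2 = s + δ / 2 := Real.sq_sqrt (by linarith)
  have hb0 : 0 < Real.sqrt (s - δ / 2) := Real.sqrt_pos.2 (by linarith)
  have ha0 : 0 < Real.sqrt (s + δ / 2) := Real.sqrt_pos.2 (by linarith)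
  have hxe : x = Real.sqrt (s - δ / 2) * Real.sqrt (s + δ / 2) := by
    rw [← Real.sqrt_mul (by linarith)]
    rw [show (s - δ / 2) * (s + δ / 2) = x ^ 2 by nlinarith]
    exact (Real.sqrt_sq hx.le).symm
  rw [qhat, ← hs]
  rw [hxe]
  set b := Real.sqrt (s - δ / 2)
  set a := Real.sqrt (s + δ / 2)
  field_simp
  linear_combination (4*a^2) * hb2 + (2*δ) * ha2

lemma hasDerivAt_psi {δ t : ℝ} (hδ : 0 ≤ δ) (ht : 0 < t) :
    HasDerivAt (fun u => Real.sqrt (Real.sqrt (u + δ ^ 2 / 4) + δ / 2) *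
        (Real.sqrt (u + δ ^ 2 / 4) - δ))
      (3 / (4 * Real.sqrt (Real.sqrt (t + δ ^ 2 / 4) + δ / 2))) t := by
  have harg : 0 < t + δ ^ 2 / 4 := by positivity
  set s := Real.sqrt (t + δ ^ 2 / 4) with hs
  have hs0 : 0 < s := Real.sqrt_pos.2 harg
  have hs2 : s ^ 2 = t + δ ^ 2 / 4 := Real.sq_sqrt harg.le
  have hS : HasDerivAt (fun u : ℝ => Real.sqrt (u + δ ^ 2 / 4)) (1 / (2 * s)) t := by
    have h1 : HasDerivAt (fun u : ℝ => u + δ ^ 2 / 4) 1 t :=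
      (hasDerivAt_id t).add_const _
    simpa [Function.comp_def] using (Real.hasDerivAt_sqrt (ne_of_gt harg)).comp t h1
  have ha0 : 0 < s + δ / 2 := by linarith
  have haa : 0 < Real.sqrt (s + δ / 2) := Real.sqrt_pos.2 ha0
  set A := Real.sqrt (s + δ / 2) with hA
  have hA2 : A ^ 2 = s + δ / 2 := Real.sq_sqrt ha0.le
  have hAd : HasDerivAt (fun u : ℝ => Real.sqrt (Real.sqrt (u + δ ^ 2 / 4) + δ / 2))
      (1 / (2 * A) * (1 / (2 * s))) t := by
    have h2 : HasDerivAt (fun u : ℝ => Real.sqrt (u + δ ^ 2 / 4) + δ / 2) (1 / (2 * s)) t :=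
      hS.add_const _
    simpa [Function.comp_def] using (Real.hasDerivAt_sqrt (ne_of_gt ha0)).comp t h2
  have hBd : HasDerivAt (fun u : ℝ => Real.sqrt (u + δ ^ 2 / 4) - δ) (1 / (2 * s)) t :=
    hS.sub_const _
  have hmul := hAd.fun_mul hBd
  rw [← hs, ← hA] at hmul
  refine hmul.congr_deriv ?_
  symm
  field_simp
  linear_combination (-8) * hA2

lemma hasGradientAt_qhat_norm {δ : ℝ} (hδ : 0 ≤ δ) {u : F} (hu : u ≠ 0) :
    HasGradientAt (fun v => qhat δ ‖v‖)
      ((3 / (2 * Real.sqrt (Real.sqrt (‖u‖ ^ 2 + δ ^ 2 / 4) + δ / 2))) • u) u := by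
  have hun : 0 < ‖u‖ := norm_pos_iff.2 hu
  have ht : 0 < ‖u‖ ^ 2 := by positivity
  have hpsi := hasDerivAt_psi hδ ht
  have hns : HasGradientAt (fun v : F => ‖v‖ ^ 2) ((2:ℝ) • u) u := hasGradientAt_norm_sq u
  have hcomp := HasGradientAt.scalar_comp (f := fun v : F => ‖v‖ ^ 2) hpsi hns
  have heq : (fun v : F => Real.sqrt (Real.sqrt (‖v‖ ^ 2 + δ ^ 2 / 4) + δ / 2) *
      (Real.sqrt (‖v‖ ^ 2 + δ ^ 2 / 4) - δ)) =ᶠ[nhds u] fun v => qhat δ ‖v‖ := by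
    filter_upwards [eventually_ne_nhds hu] with v hv
    rw [qhat_eq hδ (norm_pos_iff.2 hv)]
  have hfin := hcomp.congr_nhds heq
  convert hfin using 1
  rw [smul_smul]
  congr 1
  ring

lemma hasGradientAt_sum' {ι : Type*} (s : Finset ι) {f : ι → F → ℝ} {gf : ι → F} {x : F}
    (h : ∀ n ∈ s, HasGradientAt (f n) (gf n) x) :
    HasGradientAt (fun v => ∑ n ∈ s, f n v) (∑ n ∈ s, gf n) x := by
  refine hasGradientAt_of_fderiv
    (HasFDerivAt.fun_sum (fun n hn => (h n hn).hasFDerivAt)) fun v => ?_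
  simp [InnerProductSpace.toDual_apply_apply, sum_inner]

lemma HasGradientAt.const_mul'' {f : F → ℝ} {gf : F} {x : F} (c : ℝ)
    (hf : HasGradientAt f gf x) : HasGradientAt (fun v => c * f v) (c • gf) x := by
  have : HasDerivAt (fun r : ℝ => c * r) c (f x) := by
    simpa using (hasDerivAt_id (f x)).const_mul c
  exact HasGradientAt.scalar_comp this hf


section Leaky

lemma sum_mul_eq_inner {d : ℕ} (v u : EuclideanSpace ℝ (Fin d)) :
    ∑ i, v i * u i = ⟪u, v⟫ := by
  rw [PiLp.inner_apply]
  simp [RCLike.inner_apply, mul_comm]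

lemma leaky_eq {ρ : ℝ} (hρ1 : ρ ≤ 1) (x : ℝ) :
    max x (ρ * x) = (if 0 < x then 1 else ρ) * x := by
  by_cases hx : 0 < x
  · rw [if_pos hx, one_mul, max_eq_left (mul_le_of_le_one_left hx.le hρ1)]
  · push_neg at hx
    rw [if_neg (not_lt.2 hx), max_eq_right]
    nlinarith

lemma leaky_eventually {ρ : ℝ} (hρ1 : ρ ≤ 1) {c : ℝ} (hc : c ≠ 0) :
    ∀ᶠ x in nhds c, max x (ρ * x) = (if 0 < c then 1 else ρ) * x := by
  rcases hc.lt_or_gt with h | h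
  · filter_upwards [(isOpen_Iio).eventually_mem (show c ∈ Set.Iio 0 from h)] with x hx
    rw [leaky_eq hρ1, if_neg (not_lt.2 (le_of_lt (Set.mem_Iio.1 hx))),
      if_neg (not_lt.2 (le_of_lt h))]
  · filter_upwards [(isOpen_Ioi).eventually_mem (show c ∈ Set.Ioi 0 from h)] with x hx
    rw [leaky_eq hρ1, if_pos (Set.mem_Ioi.1 hx), if_pos h]

end Leaky

section LossDeriv
variable {d N : ℕ}

lemma hasDerivAt_loss_a (ρ : ℝ) (X : Fin N → EuclideanSpace ℝ (Fin d)) (y : Fin N → ℝ)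
    (w : EuclideanSpace ℝ (Fin d)) (a : ℝ) :
    HasDerivAt (fun b => leakyLoss ρ X y b w)
      (1 / (2 * (N : ℝ)) * ∑ n,
        (2 * (y n - a * max (∑ i, w i * X n i) (ρ * ∑ i, w i * X n i)) *
          (-(max (∑ i, w i * X n i) (ρ * ∑ i, w i * X n i))))) a := by
  unfold leakyLoss
  refine HasDerivAt.const_mul _ (HasDerivAt.fun_sum fun n _ => ?_)
  set m := max (∑ i, w i * X n i) (ρ * ∑ i, w i * X n i) with hm
  have h1 : HasDerivAt (fun b : ℝ => y n - b * m) (-m) a := by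
    simpa using ((hasDerivAt_id a).mul_const m).const_sub (y n)
  simpa [mul_comm, mul_assoc, mul_left_comm] using h1.fun_pow 2

lemma hasGradientAt_model {ρ : ℝ} (hρ1 : ρ ≤ 1) (x0 : EuclideanSpace ℝ (Fin d))
    {w : EuclideanSpace ℝ (Fin d)} (hc : ∑ i, w i * x0 i ≠ 0) (A : ℝ) :
    HasGradientAt (fun v : EuclideanSpace ℝ (Fin d) =>
        A * max (∑ i, v i * x0 i) (ρ * ∑ i, v i * x0 i))
      ((A * (if 0 < ∑ i, w i * x0 i then 1 else ρ)) • x0) w := by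
  set s : ℝ := if 0 < ∑ i, w i * x0 i then 1 else ρ with hs
  have hsm : HasGradientAt (fun v : EuclideanSpace ℝ (Fin d) => A * (s * ⟪x0, v⟫))
      ((A * s) • x0) w := by
    have h1 := (hasGradientAt_inner_const x0 w).const_mul'' s
    have h2 := h1.const_mul'' A
    simpa [smul_smul, mul_assoc] using h2
  refine hsm.congr_nhds ?_
  have hcont : ContinuousAt (fun v : EuclideanSpace ℝ (Fin d) => ∑ i, v i * x0 i) w := by
    have : (fun v : EuclideanSpace ℝ (Fin d) => ∑ i, v i * x0 i)
        = fun v => ⟪x0, v⟫ := funext fun v => sum_mul_eq_inner v x0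
    rw [this]
    exact (continuous_const.inner continuous_id).continuousAt
  filter_upwards [hcont.eventually (leaky_eventually hρ1 hc)] with v hv
  rw [hv, show (if 0 < ∑ i, w i * x0 i then (1:ℝ) else ρ) = s from rfl,
    sum_mul_eq_inner v x0]

lemma hasGradientAt_loss_w {ρ : ℝ} (hρ1 : ρ ≤ 1) (X : Fin N → EuclideanSpace ℝ (Fin d))
    (y : Fin N → ℝ) (a : ℝ) (w : EuclideanSpace ℝ (Fin d))
    (hk : ∀ n, (∑ i, w i * X n i) ≠ 0) :
    HasGradientAt (fun v => leakyLoss ρ X y a v)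
      (∑ n, (1 / (2 * (N : ℝ)) *
        (2 * (y n - a * max (∑ i, w i * X n i) (ρ * ∑ i, w i * X n i)) *
          (-(a * (if 0 < (∑ i, w i * X n i) then 1 else ρ))))) • X n) w := by
  set s : Fin N → ℝ := fun n => if 0 < (∑ i, w i * X n i) then 1 else ρ with hsdef
  have hsm : ∀ n : Fin N, HasGradientAt
      (fun v : EuclideanSpace ℝ (Fin d) => (y n - a * (s n * ⟪X n, v⟫)) ^ 2)
      ((2 * (y n - a * (s n * ⟪X n, w⟫)) * (-(a * s n))) • X n) w := by
    intro n
    have hg : HasGradientAt (fun v : EuclideanSpace ℝ (Fin d) => ⟪X n, v⟫) (X n) w :=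
      hasGradientAt_inner_const _ _
    have hd : HasDerivAt (fun r : ℝ => (y n - a * (s n * r)) ^ 2)
        (2 * (y n - a * (s n * ⟪X n, w⟫)) * (-(a * s n))) (⟪X n, w⟫) := by
      have h1 : HasDerivAt (fun r : ℝ => y n - a * (s n * r)) (-(a * s n)) (⟪X n, w⟫) := by
        simpa [mul_assoc] using
          (((hasDerivAt_id (⟪X n, w⟫ : ℝ)).const_mul (s n)).const_mul a).const_sub (y n)
      simpa using h1.fun_pow 2
    exact HasGradientAt.scalar_comp hd hg
  have hsum := hasGradientAt_sum' Finset.univ (fun n _ => hsm n)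
  have hall := hsum.const_mul'' (1 / (2 * (N : ℝ)))
  have hev : (fun v : EuclideanSpace ℝ (Fin d) =>
      1 / (2 * (N : ℝ)) * ∑ n, (y n - a * (s n * ⟪X n, v⟫)) ^ 2)
      =ᶠ[nhds w] fun v => leakyLoss ρ X y a v := by
    have hn : ∀ n : Fin N, ∀ᶠ v in nhds w,
        max (∑ i, v i * X n i) (ρ * ∑ i, v i * X n i) = s n * (∑ i, v i * X n i) := by
      intro n
      have hcont : ContinuousAt (fun v : EuclideanSpace ℝ (Fin d) => ∑ i, v i * X n i) w := by
        have : (fun v : EuclideanSpace ℝ (Fin d) => ∑ i, v i * X n i)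
            = fun v => ⟪X n, v⟫ := funext fun v => sum_mul_eq_inner v (X n)
        rw [this]
        exact (continuous_const.inner continuous_id).continuousAt
      exact hcont.eventually (leaky_eventually hρ1 (hk n))
    filter_upwards [Filter.eventually_all.2 hn] with v hv
    unfold leakyLoss
    congr 1
    refine Finset.sum_congr rfl fun n _ => ?_
    rw [hv n, sum_mul_eq_inner v (X n)]
  have hfin := hall.congr_nhds hev
  have heq : (1 / (2 * (N : ℝ))) •
      (∑ n, (2 * (y n - a * (s n * ⟪X n, w⟫)) * (-(a * s n))) • X n)
      = ∑ n, (1 / (2 * (N : ℝ)) *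
        (2 * (y n - a * max (∑ i, w i * X n i) (ρ * ∑ i, w i * X n i)) *
          (-(a * s n)))) • X n := by
    rw [Finset.smul_sum]
    refine Finset.sum_congr rfl fun n _ => ?_
    rw [smul_smul]
    congr 2
    rw [leaky_eq hρ1, show (if 0 < ∑ i, w i * X n i then (1:ℝ) else ρ) = s n from rfl,
      sum_mul_eq_inner w (X n)]
  rw [heq] at hfin
  exact hfin

end LossDeriv

section FlowAux

lemma constant_on_Ici {E : Type*} [NormedAddCommGroup E] [NormedSpace ℝ E]
    {f : ℝ → E} (hf : ∀ t, 0 ≤ t → HasDerivAt f 0 t) : ∀ t, 0 ≤ t → f t = f 0 := by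
  intro t ht
  have hcont : ContinuousOn f (Set.Icc 0 t) := fun x hx =>
    ((hf x hx.1).continuousAt).continuousWithinAt
  exact constant_of_has_deriv_right_zero hcont
    (fun x hx => ((hf x hx.1).hasDerivWithinAt)) t (Set.right_mem_Icc.2 ht)

lemma same_sign {a : ℝ → ℝ} (hc : ∀ t, 0 ≤ t → ContinuousAt a t)
    (hne : ∀ t, 0 ≤ t → a t ≠ 0) {t : ℝ} (ht : 0 ≤ t) : 0 < a 0 * a t := by
  by_contra hcon
  push_neg at hcon
  have h0 : a 0 ≠ 0 := hne 0 le_rfl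
  have htne : a t ≠ 0 := hne t ht
  have hlt : a 0 * a t < 0 := hcon.lt_of_ne (mul_ne_zero h0 htne)
  have hcont : ContinuousOn a (Set.Icc 0 t) := fun x hx => (hc x hx.1).continuousWithinAt
  rcases lt_or_gt_of_ne h0 with h1 | h1
  · have h2 : 0 < a t := by nlinarith
    obtain ⟨s, hs, h3⟩ := intermediate_value_Icc ht hcont
      (Set.mem_Icc.2 ⟨h1.le, h2.le⟩)
    exact hne s hs.1 h3
  · have h2 : a t < 0 := by nlinarith
    obtain ⟨s, hs, h3⟩ := intermediate_value_Icc' ht hcont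
      (Set.mem_Icc.2 ⟨h2.le, h1.le⟩)
    exact hne s hs.1 h3

lemma sqrt_aux1 (α β : ℝ) :
    Real.sqrt ((α * β) ^ 2 + (α ^ 2 - β ^ 2) ^ 2 / 4) = (α ^ 2 + β ^ 2) / 2 := by
  rw [show (α * β) ^ 2 + (α ^ 2 - β ^ 2) ^ 2 / 4 = ((α ^ 2 + β ^ 2) / 2) ^ 2 by ring]
  exact Real.sqrt_sq (by positivity)

lemma sqrt_aux2 (α β : ℝ) :
    Real.sqrt ((α ^ 2 + β ^ 2) / 2 - (α ^ 2 - β ^ 2) / 2) = |β| := by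
  rw [show (α ^ 2 + β ^ 2) / 2 - (α ^ 2 - β ^ 2) / 2 = β ^ 2 by ring, Real.sqrt_sq_eq_abs]

lemma sqrt_aux3 (α β : ℝ) :
    Real.sqrt ((α ^ 2 + β ^ 2) / 2 + (α ^ 2 - β ^ 2) / 2) = |α| := by
  rw [show (α ^ 2 + β ^ 2) / 2 + (α ^ 2 - β ^ 2) / 2 = α ^ 2 by ring, Real.sqrt_sq_eq_abs]

end FlowAux

/-- for gradient flow on a single leaky-ReLU neuron whose trajectory
avoids the activation kinks, with balancedness `δ ≥ 0` and nonzero initialization,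
any limit `(a∞, w∞)` interpolating the data satisfies the Lagrange stationarity
conditions of minimizing `q(aw) = q̂_δ(‖aw‖) + zᵀ(aw)` subject to
`a·σ_ρ(Xᵀw) = y`. -/
theorem stmt_17 {d N : ℕ} (ρ : ℝ) (hρ0 : 0 < ρ) (hρ1 : ρ ≤ 1)
    (X : Fin N → EuclideanSpace ℝ (Fin d)) (y : Fin N → ℝ)
    (a : ℝ → ℝ) (w : ℝ → EuclideanSpace ℝ (Fin d))
    (hkink : ∀ t, 0 ≤ t → ∀ n, ∑ i, w t i * X n i ≠ 0)
    (hflow : ∀ t, 0 ≤ t →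
      HasDerivAt a (-deriv (fun b => leakyLoss ρ X y b (w t)) (a t)) t ∧
      HasDerivAt w (-gradient (fun v => leakyLoss ρ X y (a t) v) (w t)) t)
    (hδ : 0 ≤ a 0 ^ 2 - ‖w 0‖ ^ 2)
    (hinit : a 0 • w 0 ≠ 0)
    (aInf : ℝ) (wInf : EuclideanSpace ℝ (Fin d))
    (hconva : Filter.Tendsto a Filter.atTop (nhds aInf))
    (hconvw : Filter.Tendsto w Filter.atTop (nhds wInf))
    (hlim0 : aInf • wInf ≠ 0)
    (hlimkink : ∀ n, ∑ i, wInf i * X n i ≠ 0)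
    (hfit : ∀ n, aInf * max (∑ i, wInf i * X n i) (ρ * ∑ i, wInf i * X n i) = y n) :
    let δ : ℝ := a 0 ^ 2 - ‖w 0‖ ^ 2
    let w0 : EuclideanSpace ℝ (Fin d) := a 0 • w 0
    let z : EuclideanSpace ℝ (Fin d) :=
      (-(3 / 2) * Real.sqrt (Real.sqrt (‖w0‖ ^ 2 + δ ^ 2 / 4) - δ / 2) / ‖w0‖) • w0
    let q : EuclideanSpace ℝ (Fin d) → ℝ := fun u => qhat δ ‖u‖ + ∑ i, z i * u i
    ∃ ν : Fin N → ℝ,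
      gradient (fun v => q (aInf • v)) wInf =
        ∑ n, ν n • gradient
          (fun v : EuclideanSpace ℝ (Fin d) =>
            aInf * max (∑ i, v i * X n i) (ρ * ∑ i, v i * X n i)) wInf ∧
      deriv (fun b => q (b • wInf)) aInf =
        ∑ n, ν n * max (∑ i, wInf i * X n i) (ρ * ∑ i, wInf i * X n i) := by
  intro δ w0v z q
  classical
  have hδ0 : (0:ℝ) ≤ δ := hδ
  have ha0 : a 0 ≠ 0 := fun h => hinit (by rw [h, zero_smul])
  have hw0 : w 0 ≠ 0 := fun h => hinit (by rw [h, smul_zero])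
  have haI : aInf ≠ 0 := fun h => hlim0 (by rw [h, zero_smul])
  have hwI : wInf ≠ 0 := fun h => hlim0 (by rw [h, smul_zero])
  -- explicit flow derivatives
  have hda : ∀ t, 0 ≤ t → HasDerivAt a
      (-(1 / (2 * (N : ℝ)) * ∑ n,
        (2 * (y n - a t * max (∑ i, w t i * X n i) (ρ * ∑ i, w t i * X n i)) *
          (-(max (∑ i, w t i * X n i) (ρ * ∑ i, w t i * X n i)))))) t := by
    intro t ht
    have h := (hflow t ht).1
    rwa [(hasDerivAt_loss_a ρ X y (w t) (a t)).deriv] at h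
  have hdw : ∀ t, 0 ≤ t → HasDerivAt w
      (-(∑ n, (1 / (2 * (N : ℝ)) *
        (2 * (y n - a t * max (∑ i, w t i * X n i) (ρ * ∑ i, w t i * X n i)) *
          (-(a t * (if 0 < (∑ i, w t i * X n i) then 1 else ρ))))) • X n)) t := by
    intro t ht
    have h := (hflow t ht).2
    rwa [(hasGradientAt_loss_w hρ1 X y (a t) (w t) (hkink t ht)).gradient] at h
  -- conservation of a² - ‖w‖²
  have hEconst : ∀ t, 0 ≤ t → a t ^ 2 - ‖w t‖ ^ 2 = δ := by
    have hE0 : ∀ t, 0 ≤ t → HasDerivAt (fun u => a u ^ 2 - ‖w u‖ ^ 2) 0 t := by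
      intro t ht
      have hA := hda t ht
      have hW := hdw t ht
      have h1 := hA.fun_pow 2
      have h2 := HasDerivAt.inner ℝ hW hW
      rw [show (fun s => (⟪w s, w s⟫ : ℝ)) = fun s => ‖w s‖ ^ 2 from
        funext fun s => real_inner_self_eq_norm_sq _] at h2
      have h3 := h1.fun_sub h2
      refine h3.congr_deriv ?_
      symm
      have hWG : (⟪w t, (∑ n, (1 / (2 * (N : ℝ)) *
          (2 * (y n - a t * max (∑ i, w t i * X n i) (ρ * ∑ i, w t i * X n i)) *
            (-(a t * (if 0 < (∑ i, w t i * X n i) then 1 else ρ))))) • X n)⟫ : ℝ)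
          = a t * (1 / (2 * (N : ℝ)) * ∑ n,
            (2 * (y n - a t * max (∑ i, w t i * X n i) (ρ * ∑ i, w t i * X n i)) *
              (-(max (∑ i, w t i * X n i) (ρ * ∑ i, w t i * X n i))))) := by
        rw [inner_sum]
        simp only [real_inner_smul_right]
        rw [Finset.mul_sum, Finset.mul_sum]
        refine Finset.sum_congr rfl fun n _ => ?_
        rw [show (⟪w t, X n⟫ : ℝ) = ∑ i, w t i * X n i from by
          rw [sum_mul_eq_inner (w t) (X n)]; exact real_inner_comm (X n) (w t)]
        rw [leaky_eq hρ1]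
        ring
      have hWG2 := (real_inner_comm _ _).trans hWG
      simp only [inner_neg_left, inner_neg_right]
      push_cast
      linear_combination -hWG - hWG2
    exact constant_on_Ici hE0
  -- conservation at the limit
  have hδI : δ = aInf ^ 2 - ‖wInf‖ ^ 2 := by
    have h1 : Filter.Tendsto (fun t => a t ^ 2 - ‖w t‖ ^ 2) Filter.atTop
        (nhds (aInf ^ 2 - ‖wInf‖ ^ 2)) := by
      refine Filter.Tendsto.sub ?_ ?_
      · exact ((continuous_pow 2).tendsto aInf).comp hconva
      · exact ((continuous_pow 2).tendsto ‖wInf‖).comp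
          ((continuous_norm.tendsto wInf).comp hconvw)
    have h2 : Filter.Tendsto (fun t => a t ^ 2 - ‖w t‖ ^ 2) Filter.atTop (nhds δ) := by
      refine Filter.Tendsto.congr' ?_ tendsto_const_nhds
      filter_upwards [Filter.eventually_atTop.2 ⟨0, fun t ht => (hEconst t ht).symm⟩] with t h
      exact h
    exact tendsto_nhds_unique h2 h1
  -- a never vanishes
  have hane : ∀ t, 0 ≤ t → a t ≠ 0 := by
    intro t ht h0
    have hwt : w t = 0 := by
      have hE := hEconst t ht
      rw [h0] at hE
      have h1 : ‖w t‖ ≤ 0 := by nlinarith [norm_nonneg (w t)]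
      exact norm_eq_zero.1 (le_antisymm h1 (norm_nonneg _))
    rcases Nat.eq_zero_or_pos N with hN | hN
    · subst hN
      have hconst : ∀ s, 0 ≤ s → a s = a 0 := by
        refine constant_on_Ici fun s hs => ?_
        simpa using hda s hs
      exact ha0 (by rw [← hconst t ht, h0])
    · exact hkink t ht ⟨0, hN⟩ (by rw [hwt]; simp)
  -- sign is preserved
  have hsign : 0 < a 0 * aInf := by
    have h1 : ∀ t, 0 ≤ t → 0 < a 0 * a t := fun t ht =>
      same_sign (fun s hs => ((hflow s hs).1).continuousAt) hane ht
    have h2 : Filter.Tendsto (fun t => a 0 * a t) Filter.atTop (nhds (a 0 * aInf)) :=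
      hconva.const_mul _
    have h3 : 0 ≤ a 0 * aInf :=
      ge_of_tendsto h2 (Filter.eventually_atTop.2 ⟨0, fun t ht => (h1 t ht).le⟩)
    exact h3.lt_of_ne (Ne.symm (mul_ne_zero ha0 haI))
  obtain ⟨ε, hε1, hε0, hεI⟩ : ∃ ε : ℝ, ε ^ 2 = 1 ∧ ε * a 0 = |a 0| ∧ ε * aInf = |aInf| := by
    rcases lt_or_gt_of_ne ha0 with h | h
    · have hI : aInf < 0 := by nlinarith
      exact ⟨-1, by norm_num, by rw [abs_of_neg h]; ring, by rw [abs_of_neg hI]; ring⟩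
    · have hI : 0 < aInf := by nlinarith
      exact ⟨1, by norm_num, by rw [abs_of_pos h, one_mul], by rw [abs_of_pos hI, one_mul]⟩
  have hεne : ε ≠ 0 := fun h => by rw [h] at hε1; norm_num at hε1
  -- z simplification
  have hzeq : z = (-(3 / 2) * ε) • w 0 := by
    have hnv : ‖w0v‖ = |a 0| * ‖w 0‖ := by
      rw [show w0v = a 0 • w 0 from rfl, norm_smul, Real.norm_eq_abs]
    have hn2 : ‖w0v‖ ^ 2 = (a 0 * ‖w 0‖) ^ 2 := by
      rw [hnv, mul_pow, mul_pow, sq_abs]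
    have hs2 : Real.sqrt (Real.sqrt (‖w0v‖ ^ 2 + δ ^ 2 / 4) - δ / 2) = ‖w 0‖ := by
      rw [hn2, show δ = a 0 ^ 2 - ‖w 0‖ ^ 2 from rfl, sqrt_aux1,
        show (a 0 ^ 2 + ‖w 0‖ ^ 2) / 2 - (a 0 ^ 2 - ‖w 0‖ ^ 2) / 2 = ‖w 0‖ ^ 2 by ring,
        Real.sqrt_sq (norm_nonneg _)]
    rw [show z = (-(3 / 2) * Real.sqrt (Real.sqrt (‖w0v‖ ^ 2 + δ ^ 2 / 4) - δ / 2) / ‖w0v‖)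
      • w0v from rfl, hs2, show w0v = a 0 • w 0 from rfl, smul_smul]
    congr 1
    rw [hnv]
    have hw0n : ‖w 0‖ ≠ 0 := norm_ne_zero_iff.2 hw0
    have habs : |a 0| ≠ 0 := abs_ne_zero.2 ha0
    rw [← hε0]
    have hεa : ε * a 0 ≠ 0 := mul_ne_zero hεne ha0
    field_simp
    linear_combination hε1
  -- gradient of q at a nonzero point
  have hqgrad : ∀ u : EuclideanSpace ℝ (Fin d), u ≠ 0 → HasGradientAt q
      ((3 / (2 * Real.sqrt (Real.sqrt (‖u‖ ^ 2 + δ ^ 2 / 4) + δ / 2))) • u + z) u := by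
    intro u hu
    have h1 := hasGradientAt_qhat_norm (δ := δ) hδ0 hu
    have h2 : HasGradientAt (fun v : EuclideanSpace ℝ (Fin d) => (⟪z, v⟫ : ℝ)) z u :=
      hasGradientAt_inner_const z u
    refine (h1.add' h2).congr_nhds (Filter.Eventually.of_forall fun v => ?_)
    rw [show (q v : ℝ) = qhat δ ‖v‖ + ∑ i, z i * v i from rfl]
    have hzv : ∑ i, z i * v i = (⟪z, v⟫ : ℝ) := by
      rw [sum_mul_eq_inner z v]; exact real_inner_comm z v
    rw [hzv]
  -- gradient of q at aInf • wInf
  have hκ : Real.sqrt (Real.sqrt (‖aInf • wInf‖ ^ 2 + δ ^ 2 / 4) + δ / 2) = |aInf| := by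
    have hn2 : ‖aInf • wInf‖ ^ 2 = (aInf * ‖wInf‖) ^ 2 := by
      rw [norm_smul, Real.norm_eq_abs, mul_pow, mul_pow, sq_abs]
    rw [hn2, hδI, sqrt_aux1, sqrt_aux3]
  have hGq : HasGradientAt q ((3 / 2 * ε) • (wInf - w 0)) (aInf • wInf) := by
    have h := hqgrad (aInf • wInf) hlim0
    rw [hκ, smul_smul, hzeq] at h
    have hco : 3 / (2 * |aInf|) * aInf = 3 / 2 * ε := by
      rw [← hεI]
      have hεa : ε * aInf ≠ 0 := mul_ne_zero hεne haI
      field_simp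
      linear_combination (-1) * hε1
    rw [hco] at h
    have hre : (3 / 2 * ε) • wInf + (-(3 / 2) * ε) • w 0 = (3 / 2 * ε) • (wInf - w 0) := by
      rw [smul_sub, show (-(3 / 2) * ε : ℝ) = -(3 / 2 * ε) by ring, neg_smul,
        ← sub_eq_add_neg]
    rwa [hre] at h
  -- wInf - w 0 lies in the span of the data
  set V : Submodule ℝ (EuclideanSpace ℝ (Fin d)) := Submodule.span ℝ (Set.range X) with hV
  have hinner0 : ∀ u, u ∈ Vᗮ → ∀ t, 0 ≤ t → (⟪u, w t⟫ : ℝ) = ⟪u, w 0⟫ := by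
    intro u hu
    refine constant_on_Ici (f := fun t => (⟪u, w t⟫ : ℝ)) fun t ht => ?_
    have hW := hdw t ht
    have h2 := HasDerivAt.inner ℝ (hasDerivAt_const t u) hW
    have hx : ∀ n, (⟪u, X n⟫ : ℝ) = 0 := fun n =>
      (Submodule.mem_orthogonal' V u).1 hu (X n) (Submodule.subset_span ⟨n, rfl⟩)
    refine h2.congr_deriv ?_
    symm
    simp only [inner_neg_right, inner_sum, real_inner_smul_right, hx, mul_zero,
      Finset.sum_const_zero, neg_zero, inner_zero_left, add_zero]
  have hspan : wInf - w 0 ∈ V := by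
    rw [← Submodule.orthogonal_orthogonal V, Submodule.mem_orthogonal]
    intro u hu
    have hlim : Filter.Tendsto (fun t => (⟪u, w t⟫ : ℝ)) Filter.atTop
        (nhds (⟪u, wInf⟫ : ℝ)) := Filter.Tendsto.inner tendsto_const_nhds hconvw
    have hconst : Filter.Tendsto (fun t => (⟪u, w t⟫ : ℝ)) Filter.atTop
        (nhds (⟪u, w 0⟫ : ℝ)) := by
      refine Filter.Tendsto.congr' ?_ tendsto_const_nhds
      filter_upwards [Filter.eventually_atTop.2 ⟨0, fun t ht => (hinner0 u hu t ht).symm⟩]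
        with t h
      exact h
    have heq : (⟪u, wInf⟫ : ℝ) = ⟪u, w 0⟫ := tendsto_nhds_unique hlim hconst
    rw [inner_sub_right, heq, sub_self]
  obtain ⟨c, hc⟩ := (Submodule.mem_span_range_iff_exists_fun ℝ).1 hspan
  -- the multipliers
  have hsne : ∀ n : Fin N, (if 0 < ∑ i, wInf i * X n i then (1:ℝ) else ρ) ≠ 0 := by
    intro n
    split
    · norm_num
    · exact ne_of_gt hρ0
  set ν : Fin N → ℝ := fun n =>
    3 / 2 * ε * c n / (if 0 < ∑ i, wInf i * X n i then (1:ℝ) else ρ) with hν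
  refine ⟨ν, ?_, ?_⟩
  · -- vector stationarity
    rw [(HasGradientAt.comp_const_smul hGq).gradient]
    have hR : ∀ n : Fin N, gradient (fun v : EuclideanSpace ℝ (Fin d) =>
        aInf * max (∑ i, v i * X n i) (ρ * ∑ i, v i * X n i)) wInf
        = (aInf * (if 0 < ∑ i, wInf i * X n i then (1:ℝ) else ρ)) • X n := fun n =>
      (hasGradientAt_model hρ1 (X n) (hlimkink n) aInf).gradient
    simp only [hR]
    rw [← hc, smul_smul, Finset.smul_sum]
    refine Finset.sum_congr rfl fun n _ => ?_
    rw [smul_smul, smul_smul]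
    congr 1
    simp only [hν]
    field_simp [hsne n]
  · -- scalar stationarity
    have hsmul : HasDerivAt (fun b : ℝ => b • wInf) wInf aInf := by
      simpa using (hasDerivAt_id aInf).smul_const wInf
    have hcomp : HasDerivAt (fun b : ℝ => q (b • wInf))
        (((InnerProductSpace.toDual ℝ (EuclideanSpace ℝ (Fin d)))
          ((3 / 2 * ε) • (wInf - w 0))) wInf) aInf :=
      HasFDerivAt.comp_hasDerivAt (l := q) aInf hGq.hasFDerivAt hsmul
    rw [hcomp.deriv, InnerProductSpace.toDual_apply_apply, ← hc, real_inner_smul_left, sum_inner]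
    simp only [real_inner_smul_left]
    rw [Finset.mul_sum]
    refine Finset.sum_congr rfl fun n _ => ?_
    simp only [hν]
    rw [leaky_eq hρ1, sum_mul_eq_inner wInf (X n)]
    have hne' : (if 0 < (⟪X n, wInf⟫ : ℝ) then (1:ℝ) else ρ) ≠ 0 := by
      rw [← sum_mul_eq_inner wInf (X n)]; exact hsne n
    field_simp [hne']
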